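/- Let R be a ring, n ≥ 2, and let p be a multilinear polynomial over the center Z(R) in m noncommuting variables. If the image p(Mₙ(R)) is contained in {0} ∪ (Mₙ(R) \ slₙ(R)) (i.e., every value of p is either 0 or has nonzero trace) and p(Mₙ(R)) ≠ {0}, then p(Mₙ(R)) ⊆ Z(Mₙ(R)), i.e., every value of p is a central scalar matrix a·Iₙ with a ∈ Z(R). -/

import Mathlib

namespace Stmt16Aux

variable {R : Type*} [Ring R] {n : ℕ}

/-- The `ZMod n` degree of the matrix position `(i, j)`. -/
def deg (n : ℕ) (i j : Fin n) : ZMod n := ((j : ℕ) : ZMod n) - ((i : ℕ) : ZMod n)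

lemma deg_self (i : Fin n) : deg n i i = 0 := sub_self _

lemma deg_eq_zero_iff {i j : Fin n} : deg n i j = 0 ↔ i = j := by
  unfold deg
  rw [sub_eq_zero]
  constructor
  · intro h
    have h' := congrArg ZMod.val h
    rw [ZMod.val_cast_of_lt j.isLt, ZMod.val_cast_of_lt i.isLt] at h'
    exact Fin.ext h'.symm
  · rintro rfl; rfl

/-- Homogeneity of degree `d`. -/
def Hom (d : ZMod n) (X : Matrix (Fin n) (Fin n) R) : Prop :=
  ∀ i j, X i j ≠ 0 → deg n i j = d

lemma Hom.mul {a b : ZMod n} {X Y : Matrix (Fin n) (Fin n) R}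
    (hX : Hom a X) (hY : Hom b Y) : Hom (a + b) (X * Y) := by
  intro i j h
  rw [Matrix.mul_apply] at h
  obtain ⟨k, -, hk⟩ := Finset.exists_ne_zero_of_sum_ne_zero h
  have h1 : X i k ≠ 0 := fun h0 => hk (by rw [h0, zero_mul])
  have h2 : Y k j ≠ 0 := fun h0 => hk (by rw [h0, mul_zero])
  rw [← hX i k h1, ← hY k j h2]
  unfold deg; ring

lemma Hom.smul {d : ZMod n} {X : Matrix (Fin n) (Fin n) R} (r : R) (h : Hom d X) :
    Hom d (r • X) := by
  intro i j hij
  refine h i j fun h0 => hij ?_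
  rw [Matrix.smul_apply, h0, smul_zero]

lemma Hom.sum {ι : Type*} {s : Finset ι} {d : ZMod n} {f : ι → Matrix (Fin n) (Fin n) R}
    (h : ∀ i ∈ s, Hom d (f i)) : Hom d (∑ i ∈ s, f i) := by
  intro i j hij
  rw [Matrix.sum_apply] at hij
  obtain ⟨k, hk, hk0⟩ := Finset.exists_ne_zero_of_sum_ne_zero hij
  exact h k hk i j hk0

lemma Hom.one : Hom (0 : ZMod n) (1 : Matrix (Fin n) (Fin n) R) := by
  intro i j h
  have hij : i = j := by
    by_contra hij
    rw [Matrix.one_apply_ne hij] at h; exact h rfl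
  subst hij; exact deg_self i

lemma Hom.ofFn_prod {m : ℕ} (X : Fin m → Matrix (Fin n) (Fin n) R) (d : Fin m → ZMod n)
    (h : ∀ t, Hom (d t) (X t)) : Hom (∑ t, d t) (List.ofFn X).prod := by
  induction m with
  | zero => simpa using Hom.one
  | succ k ih =>
      rw [List.ofFn_succ, List.prod_cons, Fin.sum_univ_succ]
      exact (h 0).mul (ih _ _ fun t => h t.succ)

lemma Hom.trace_eq_zero {d : ZMod n} (hd : d ≠ 0) {X : Matrix (Fin n) (Fin n) R}
    (h : Hom d X) : X.trace = 0 := by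
  rw [Matrix.trace]
  refine Finset.sum_eq_zero fun i _ => ?_
  by_contra h0
  exact hd ((h i i h0).symm.trans (deg_self i))

/-- The degree-`d` graded component of a matrix. -/
def comp (d : ZMod n) (X : Matrix (Fin n) (Fin n) R) : Matrix (Fin n) (Fin n) R :=
  Matrix.of fun i j => if deg n i j = d then X i j else 0

lemma Hom.comp (d : ZMod n) (X : Matrix (Fin n) (Fin n) R) : Hom d (Stmt16Aux.comp d X) := by
  intro i j h
  by_contra hd
  simp only [Stmt16Aux.comp, Matrix.of_apply, if_neg hd] at h
  exact h rfl

lemma sum_comp [NeZero n] (X : Matrix (Fin n) (Fin n) R) :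
    ∑ d : ZMod n, comp d X = X := by
  ext i j
  rw [Matrix.sum_apply]
  simp [comp, Finset.sum_ite_eq]

lemma conj_list_prod (u u' : Matrix (Fin n) (Fin n) R) (h1 : u * u' = 1) (h2 : u' * u = 1)
    (l : List (Matrix (Fin n) (Fin n) R)) :
    (l.map fun x => u * x * u').prod = u * l.prod * u' := by
  induction l with
  | nil => rw [List.map_nil, List.prod_nil, mul_one, h1]
  | cons a t ih =>
      rw [List.map_cons, List.prod_cons, List.prod_cons, ih]
      have key : u' * (u * t.prod * u') = t.prod * u' := by
        rw [← mul_assoc, ← mul_assoc, h2, one_mul]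
      rw [mul_assoc (u * a) u', key, ← mul_assoc, mul_assoc u a]

lemma mul_central_smul {r : R} (hr : r ∈ Set.center R) (u M : Matrix (Fin n) (Fin n) R) :
    u * (r • M) = r • (u * M) := by
  ext i j
  rw [Matrix.smul_apply, Matrix.mul_apply, Matrix.mul_apply, Finset.smul_sum]
  refine Finset.sum_congr rfl fun k _ => ?_
  rw [Matrix.smul_apply, smul_eq_mul, smul_eq_mul, ← mul_assoc,
    Semigroup.mem_center_iff.mp hr (u i k), mul_assoc]

end Stmt16Aux

open Stmt16Aux in
/-- if a multilinear polynomial over the center of `R` takes only values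
that are zero or of nonzero trace on `Mₙ(R)` (`n ≥ 2`), and is not identically zero,
then all its values are central scalar matrices. -/
theorem stmt_16 (R : Type*) [Ring R] (n : ℕ) (hn : 2 ≤ n)
    (m : ℕ) (lam : Equiv.Perm (Fin m) → R)
    (hlam : ∀ σ, lam σ ∈ Set.center R) :
    (∀ B : Fin m → Matrix (Fin n) (Fin n) R,
        (∑ σ : Equiv.Perm (Fin m), lam σ • (List.ofFn fun t => B (σ t)).prod) = 0 ∨
        (∑ σ : Equiv.Perm (Fin m), lam σ • (List.ofFn fun t => B (σ t)).prod).trace ≠ 0) →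
    (∃ B : Fin m → Matrix (Fin n) (Fin n) R,
        (∑ σ : Equiv.Perm (Fin m), lam σ • (List.ofFn fun t => B (σ t)).prod) ≠ 0) →
    ∀ B : Fin m → Matrix (Fin n) (Fin n) R,
      ∃ a ∈ Set.center R,
        (∑ σ : Equiv.Perm (Fin m), lam σ • (List.ofFn fun t => B (σ t)).prod) =
          a • (1 : Matrix (Fin n) (Fin n) R) := by
  intro hmain _hex B0
  haveI : NeZero n := ⟨by omega⟩
  classical
  let P : MultilinearMap ℤ (fun _ : Fin m => Matrix (Fin n) (Fin n) R)
      (Matrix (Fin n) (Fin n) R) :=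
    ∑ σ : Equiv.Perm (Fin m),
      lam σ • (MultilinearMap.mkPiAlgebraFin ℤ m (Matrix (Fin n) (Fin n) R)).domDomCongr σ
  have hP : ∀ B : Fin m → Matrix (Fin n) (Fin n) R,
      P B = ∑ σ : Equiv.Perm (Fin m), lam σ • (List.ofFn fun t => B (σ t)).prod := by
    intro B
    show (∑ σ : Equiv.Perm (Fin m),
      lam σ • (MultilinearMap.mkPiAlgebraFin ℤ m (Matrix (Fin n) (Fin n) R)).domDomCongr σ) B = _
    rw [MultilinearMap.sum_apply]
    refine Finset.sum_congr rfl fun σ _ => ?_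
    rw [MultilinearMap.smul_apply, MultilinearMap.domDomCongr_apply,
      MultilinearMap.mkPiAlgebraFin_apply]
  have homP : ∀ (d : Fin m → ZMod n) (B : Fin m → Matrix (Fin n) (Fin n) R),
      (∀ k, Hom (d k) (B k)) → Hom (∑ k, d k) (P B) := by
    intro d B h
    rw [hP]
    refine Hom.sum fun σ _ => ?_
    have h2 := Hom.ofFn_prod (fun t => B (σ t)) (fun t => d (σ t)) (fun t => h (σ t))
    rw [Equiv.sum_comp σ d] at h2
    exact h2.smul _
  have diagP : ∀ (B : Fin m → Matrix (Fin n) (Fin n) R) (i j : Fin n), i ≠ j → P B i j = 0 := by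
    intro B i j hij
    have hB : B = fun k => ∑ dd : ZMod n, comp dd (B k) := funext fun k => (sum_comp (B k)).symm
    have expand : P B = ∑ g : Fin m → ZMod n, P fun k => comp (g k) (B k) := by
      calc P B = P (fun k => ∑ dd : ZMod n, comp dd (B k)) := by rw [← hB]
        _ = _ := P.map_sum fun k dd => comp dd (B k)
    rw [expand, Matrix.sum_apply]
    refine Finset.sum_eq_zero fun g _ => ?_
    have hhom := homP g _ (fun k => Hom.comp (g k) (B k))
    by_cases hg : ∑ k, g k = 0
    · rw [hg] at hhom
      by_contra h0
      exact hij (deg_eq_zero_iff.mp (hhom i j h0))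
    · have htr : (P fun k => comp (g k) (B k)).trace = 0 := hhom.trace_eq_zero hg
      rcases hmain (fun k => comp (g k) (B k)) with h0 | h1
      · rw [hP, h0, Matrix.zero_apply]
      · rw [hP] at htr
        exact absurd htr h1
  have conjP : ∀ u u' : Matrix (Fin n) (Fin n) R, u * u' = 1 → u' * u = 1 →
      ∀ B : Fin m → Matrix (Fin n) (Fin n) R,
        P (fun k => u * B k * u') = u * P B * u' := by
    intro u u' h1 h2 B
    rw [hP, hP, Finset.mul_sum, Finset.sum_mul]
    refine Finset.sum_congr rfl fun σ _ => ?_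
    have hl : (List.ofFn fun t => u * B (σ t) * u').prod
        = u * (List.ofFn fun t => B (σ t)).prod * u' := by
      rw [← conj_list_prod u u' h1 h2, List.map_ofFn]
      rfl
    rw [hl, mul_central_smul (hlam σ), Matrix.smul_mul]
  -- key relation for the value at B0
  have hdiag := diagP B0
  have key : ∀ (i j : Fin n), i ≠ j → ∀ r : R, r * P B0 j j = P B0 i i * r := by
    intro i j hij r
    set E := Matrix.single i j r with hE
    have hEE : E * E = 0 := Matrix.single_mul_single_of_ne r i j i (Ne.symm hij) r
    have h1 : (1 + E) * (1 - E) = 1 := by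
      have : (1 + E) * (1 - E) = 1 - E * E := by noncomm_ring
      rw [this, hEE, sub_zero]
    have h2 : (1 - E) * (1 + E) = 1 := by
      have : (1 - E) * (1 + E) = 1 - E * E := by noncomm_ring
      rw [this, hEE, sub_zero]
    have hc := conjP (1 + E) (1 - E) h1 h2 B0
    have hz := diagP (fun k => (1 + E) * B0 k * (1 - E)) i j hij
    rw [hc] at hz
    have hN : ((1 + E) * P B0) i j = r * P B0 j j := by
      rw [add_mul, one_mul, Matrix.add_apply, hE,
        Matrix.single_mul_apply_same, hdiag i j hij, zero_add]
    have hNi : ((1 + E) * P B0) i i = P B0 i i := by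
      rw [add_mul, one_mul, Matrix.add_apply, hE,
        Matrix.single_mul_apply_same, hdiag j i (Ne.symm hij), mul_zero, add_zero]
    rw [mul_sub, mul_one, Matrix.sub_apply, hE,
      Matrix.mul_single_apply_same, hN, hNi, sub_eq_zero] at hz
    exact hz
  have hne : (⟨0, by omega⟩ : Fin n) ≠ ⟨1, by omega⟩ := Fin.ne_of_val_ne (by simp)
  set i0 : Fin n := ⟨0, by omega⟩
  set j0 : Fin n := ⟨1, by omega⟩
  have hdall : ∀ i : Fin n, P B0 i i = P B0 i0 i0 := by
    intro i
    by_cases hi : i = i0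
    · rw [hi]
    · have := key i0 i (Ne.symm hi) 1
      rw [one_mul, mul_one] at this
      exact this
  refine ⟨P B0 i0 i0, ?_, ?_⟩
  · refine Semigroup.mem_center_iff.mpr fun g => ?_
    have := key i0 j0 hne g
    rw [hdall j0] at this
    exact this
  · rw [← hP]
    ext i j
    by_cases hij : i = j
    · subst hij
      rw [Matrix.smul_apply, Matrix.one_apply_eq, smul_eq_mul, mul_one, hdall i]
    · rw [hdiag i j hij, Matrix.smul_apply, Matrix.one_apply_ne hij, smul_zero]
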